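/- Every tree T such that (T, S) ∈ 𝒯 for some labeling S satisfies γ_t(T)/γ_sp(T) = 4/3. -/

import Mathlib

open SimpleGraph

/-- `S` is a super dominating set of `G`: every vertex `u ∉ S` has some `v ∈ S`
with `N(v) ∩ Sᶜ = {u}`. -/
def SuperDomSet {V : Type} (G : SimpleGraph V) (S : Set V) : Prop :=
  ∀ u ∈ Sᶜ, ∃ v ∈ S, G.neighborSet v ∩ Sᶜ = {u}

/-- The super domination number `γ_sp(G)`. -/
noncomputable def superDomNum {V : Type} (G : SimpleGraph V) : ℕ :=
  sInf {n | ∃ S : Set V, SuperDomSet G S ∧ S.ncard = n}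

/-- `S` is a dominating set of `G`. -/
def DomSet {V : Type} (G : SimpleGraph V) (S : Set V) : Prop :=
  ∀ u ∉ S, ∃ v ∈ S, G.Adj v u

/-- The domination number `γ(G)`. -/
noncomputable def domNum {V : Type} (G : SimpleGraph V) : ℕ :=
  sInf {n | ∃ S : Set V, DomSet G S ∧ S.ncard = n}

/-- `S` is a total dominating set of `G`: every vertex has a neighbor in `S`. -/
def TotalDomSet {V : Type} (G : SimpleGraph V) (S : Set V) : Prop :=
  ∀ u : V, ∃ v ∈ S, G.Adj v u

/-- The total domination number `γ_t(G)`. -/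
noncomputable def totalDomNum {V : Type} (G : SimpleGraph V) : ℕ :=
  sInf {n | ∃ S : Set V, TotalDomSet G S ∧ S.ncard = n}

/-- A leaf is a vertex of degree 1. -/
def IsLeaf {V : Type} (G : SimpleGraph V) (v : V) : Prop :=
  (G.neighborSet v).ncard = 1

/-- A support vertex is a vertex adjacent to a leaf. -/
def IsSupport {V : Type} (G : SimpleGraph V) (v : V) : Prop :=
  ∃ u, G.Adj v u ∧ IsLeaf G u

/-- Attach a path `u₁u₂u₃u₄u₅u₆` (indices `0,…,5`) to `G` together with the edge
joining `u₃` (index `2`) to `v`. -/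
def attachPath6 {V : Type} (G : SimpleGraph V) (v : V) : SimpleGraph (V ⊕ Fin 6) where
  Adj x y :=
    match x, y with
    | Sum.inl a, Sum.inl b => G.Adj a b
    | Sum.inl a, Sum.inr i => a = v ∧ (i : ℕ) = 2
    | Sum.inr i, Sum.inl a => a = v ∧ (i : ℕ) = 2
    | Sum.inr i, Sum.inr j => (SimpleGraph.pathGraph 6).Adj i j
  symm := by
    constructor
    rintro (a | i) (b | j) h
    · exact h.symm
    · exact h
    · exact h
    · exact (SimpleGraph.pathGraph 6).symm.symm _ _ h
  loopless := by
    constructor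
    rintro (a | i) h
    · exact G.loopless.irrefl a h
    · exact (SimpleGraph.pathGraph 6).loopless.irrefl i h

/-- Vertex statuses for labeled trees. -/
inductive Status : Type
  | A | B | C
deriving DecidableEq

/-- The labeling of the (attached or base) path `P₆`: statuses `C,A,B,B,A,C`. -/
def pathLabel : Fin 6 → Status := fun i =>
  if (i : ℕ) = 0 ∨ (i : ℕ) = 5 then Status.C
  else if (i : ℕ) = 1 ∨ (i : ℕ) = 4 then Status.A
  else Status.B

/-- The family 𝒯 of labeled trees: it contains `(P₆, S₀)` (leaves labeled `C`,
support vertices labeled `A`, middle vertices labeled `B`) and is closed under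
operation 𝒪: for a vertex `v` of status `B`, attach a path `u₁…u₆` by the edge
`u₃v`, labeling `u₁,…,u₆` with `C,A,B,B,A,C`. -/
inductive InT : (W : Type) → SimpleGraph W → (W → Status) → Prop
  | base : InT (Fin 6) (SimpleGraph.pathGraph 6) pathLabel
  | step {W : Type} {G : SimpleGraph W} {L : W → Status} (h : InT W G L)
      (v : W) (hv : L v = Status.B) :
      InT (W ⊕ Fin 6) (attachPath6 G v)
        (fun x => match x with | Sum.inl a => L a | Sum.inr i => pathLabel i)


/-! ### Auxiliary machinery for the proof -/

section AuxProof

lemma superDomSet_iff {V : Type} (G : SimpleGraph V) (S : Set V) :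
    SuperDomSet G S ↔ ∀ u, u ∉ S → ∃ v, v ∈ S ∧ ∀ y, (G.Adj v y ∧ y ∉ S) ↔ y = u := by
  unfold SuperDomSet
  simp only [Set.mem_compl_iff, Set.ext_iff, Set.mem_inter_iff, mem_neighborSet,
    Set.mem_singleton_iff]

lemma ncard_setOf_fin6 (p : Fin 6 → Prop) [DecidablePred p] :
    {i | p i}.ncard = (Finset.univ.filter p).card := by
  rw [Set.ncard_eq_toFinset_card']
  simp [Set.toFinset_setOf]

variable {W : Type} {G : SimpleGraph W} {L : W → Status} {v : W}

lemma attach_adj_ll {a b : W} :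
    (attachPath6 G v).Adj (Sum.inl a) (Sum.inl b) ↔ G.Adj a b := Iff.rfl
lemma attach_adj_lr {a : W} {i : Fin 6} :
    (attachPath6 G v).Adj (Sum.inl a) (Sum.inr i) ↔ (a = v ∧ (i : ℕ) = 2) := Iff.rfl
lemma attach_adj_rl {a : W} {i : Fin 6} :
    (attachPath6 G v).Adj (Sum.inr i) (Sum.inl a) ↔ (a = v ∧ (i : ℕ) = 2) := Iff.rfl
lemma attach_adj_rr {i j : Fin 6} :
    (attachPath6 G v).Adj (Sum.inr i) (Sum.inr j) ↔ (SimpleGraph.pathGraph 6).Adj i j := Iff.rfl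

lemma InT.finite {W : Type} {G : SimpleGraph W} {L : W → Status} (h : InT W G L) :
    Finite W := by
  induction h with
  | base => infer_instance
  | step h v hv ih =>
      haveI := ih
      infer_instance

lemma sum_setOf (p : (W ⊕ Fin 6) → Prop) :
    {x | p x} = Sum.inl '' {a | p (Sum.inl a)} ∪ Sum.inr '' {i | p (Sum.inr i)} := by
  ext (a | i) <;> simp

lemma disj_inl_inr (s : Set W) (t : Set (Fin 6)) :
    Disjoint (Sum.inl '' s) (Sum.inr '' t) := by
  rw [Set.disjoint_left]
  rintro _ ⟨a, _, rfl⟩ ⟨b, _, h⟩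
  cases h

lemma ncard_union_inl_inr [Finite W] (s : Set W) (t : Set (Fin 6)) :
    (Sum.inl '' s ∪ Sum.inr '' t : Set (W ⊕ Fin 6)).ncard = s.ncard + t.ncard := by
  rw [Set.ncard_union_eq (disj_inl_inr s t) (Set.toFinite _) (Set.toFinite _),
    Set.ncard_image_of_injective _ Sum.inl_injective,
    Set.ncard_image_of_injective _ Sum.inr_injective]

lemma ncard_sum_setOf [Finite W] (p : (W ⊕ Fin 6) → Prop) :
    {x | p x}.ncard = {a | p (Sum.inl a)}.ncard + {i | p (Sum.inr i)}.ncard := by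
  rw [sum_setOf p, ncard_union_inl_inr]

/-- Extending a super dominating set across an `attachPath6` operation. -/
lemma attach_superdom {S : Set W} (hS : SuperDomSet G S) (P : Set (Fin 6))
    (hcross : v ∈ S ↔ (2 : Fin 6) ∈ P)
    (hblock : ∀ i, i ∉ P →
      ∃ d, d ∈ P ∧ ∀ j, ((SimpleGraph.pathGraph 6).Adj d j ∧ j ∉ P) ↔ j = i) :
    SuperDomSet (attachPath6 G v) (Sum.inl '' S ∪ Sum.inr '' P) := by
  rw [superDomSet_iff]
  rintro (w | i) hu
  · have hw : w ∉ S := by simpa using hu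
    obtain ⟨x, hxS, hx⟩ := (superDomSet_iff G S).1 hS w hw
    refine ⟨Sum.inl x, Set.mem_union_left _ (Set.mem_image_of_mem _ hxS), ?_⟩
    rintro (y | j)
    · rw [attach_adj_ll]
      simpa using hx y
    · rw [attach_adj_lr]
      constructor
      · rintro ⟨⟨rfl, h2⟩, hj⟩
        have hj2 : j = 2 := Fin.ext h2
        subst hj2
        exact absurd (Set.mem_union_right _ (Set.mem_image_of_mem _ (hcross.1 hxS))) hj
      · rintro ⟨⟩
  · have hi : i ∉ P := by simpa using hu
    obtain ⟨d, hd, hdj⟩ := hblock i hi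
    refine ⟨Sum.inr d, Set.mem_union_right _ (Set.mem_image_of_mem _ hd), ?_⟩
    rintro (y | j)
    · rw [attach_adj_rl]
      constructor
      · rintro ⟨⟨rfl, h2⟩, hy⟩
        have hd2 : d = 2 := Fin.ext h2
        rw [hd2] at hd
        exact absurd (Set.mem_union_left _ (Set.mem_image_of_mem _ (hcross.2 hd))) hy
      · rintro ⟨⟩
    · rw [attach_adj_rr]
      constructor
      · rintro ⟨h1, h2⟩
        exact congrArg Sum.inr ((hdj j).1 ⟨h1, by simpa using h2⟩)
      · intro h
        obtain ⟨h1, h2⟩ := (hdj j).2 (Sum.inr_injective h)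
        exact ⟨h1, by simpa using h2⟩

/-- All the invariants carried through the induction. -/
def Good (W : Type) (G : SimpleGraph W) (L : W → Status) (k : ℕ) : Prop :=
  Nat.card W = 6 * k ∧
  {a | L a = Status.A}.ncard = 2 * k ∧
  {a | L a ≠ Status.C}.ncard = 4 * k ∧
  (∀ a, L a = Status.A → ∃ c, L c = Status.C ∧ ∀ y, G.Adj c y ↔ y = a) ∧
  (∀ x a a', G.Adj a x → G.Adj a' x → L a = Status.A → L a' = Status.A → a = a') ∧
  (∀ a x, L a = Status.A → G.Adj a x → L x ≠ Status.A) ∧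
  (∀ x, ∃ y, G.Adj y x ∧ L y ≠ Status.C) ∧
  (∃ S : Set W, SuperDomSet G S ∧ S.ncard = 3 * k)

lemma good_base : Good (Fin 6) (SimpleGraph.pathGraph 6) pathLabel 1 := by
  refine ⟨by simp, ?_, ?_, ?_, ?_, ?_, ?_, ⟨({1,2,5} : Set (Fin 6)), ?_, ?_⟩⟩
  · rw [ncard_setOf_fin6]; decide
  · rw [ncard_setOf_fin6]; decide
  · simp only [SimpleGraph.pathGraph_adj]; decide
  · simp only [SimpleGraph.pathGraph_adj]; decide
  · simp only [SimpleGraph.pathGraph_adj]; decide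
  · simp only [SimpleGraph.pathGraph_adj]; decide
  · rw [superDomSet_iff]
    simp only [SimpleGraph.pathGraph_adj, Set.mem_insert_iff, Set.mem_singleton_iff]
    decide
  · have h : ({1,2,5} : Set (Fin 6)) = {i | i = 1 ∨ i = 2 ∨ i = 5} := by ext i; simp
    rw [h, ncard_setOf_fin6]; decide

lemma good_step {k : ℕ} [Finite W] {L'' : W ⊕ Fin 6 → Status}
    (hL1 : ∀ a, L'' (Sum.inl a) = L a) (hL2 : ∀ i, L'' (Sum.inr i) = pathLabel i)
    (hgood : Good W G L k) (hv : L v = Status.B) :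
    Good (W ⊕ Fin 6) (attachPath6 G v) L'' (k + 1) := by
  obtain ⟨hn, hA, hC, hI1, hI2, hI4, hI5, S, hS, hScard⟩ := hgood
  refine ⟨?_, ?_, ?_, ?_, ?_, ?_, ?_, ?_⟩
  · rw [Nat.card_sum, hn]; simp; ring
  · rw [ncard_sum_setOf (fun x => L'' x = Status.A)]
    simp only [hL1, hL2]
    rw [hA]
    have h2 : {i : Fin 6 | pathLabel i = Status.A}.ncard = 2 := by
      rw [ncard_setOf_fin6]; decide
    rw [h2]; ring
  · rw [ncard_sum_setOf (fun x => L'' x ≠ Status.C)]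
    simp only [hL1, hL2]
    rw [hC]
    have h4 : {i : Fin 6 | pathLabel i ≠ Status.C}.ncard = 4 := by
      rw [ncard_setOf_fin6]; decide
    rw [h4]; ring
  · rintro (a | i) ha
    · rw [hL1] at ha
      obtain ⟨c, hc, hcy⟩ := hI1 a ha
      refine ⟨Sum.inl c, by rw [hL1]; exact hc, ?_⟩
      rintro (y | j)
      · rw [attach_adj_ll, hcy]; simp
      · rw [attach_adj_lr]
        constructor
        · rintro ⟨rfl, -⟩; rw [hv] at hc; exact absurd hc (by decide)
        · rintro ⟨⟩
    · rw [hL2] at ha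
      have hi : i = 1 ∨ i = 4 :=
        (by decide : ∀ i : Fin 6, pathLabel i = Status.A → i = 1 ∨ i = 4) i ha
      have key : ∀ c : Fin 6, pathLabel c = Status.C → (c : ℕ) ≠ 2 →
          (∀ j, (SimpleGraph.pathGraph 6).Adj c j ↔ j = i) →
          ∃ c', L'' c' = Status.C ∧ ∀ y, (attachPath6 G v).Adj c' y ↔ y = Sum.inr i := by
        intro c hc hc2 hcj
        refine ⟨Sum.inr c, by rw [hL2]; exact hc, ?_⟩
        rintro (y | j)
        · rw [attach_adj_rl]
          constructor
          · rintro ⟨-, h2⟩; exact absurd h2 hc2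
          · rintro ⟨⟩
        · rw [attach_adj_rr, hcj]; simp
      rcases hi with rfl | rfl
      · exact key 0 (by decide) (by decide)
          (by simp only [SimpleGraph.pathGraph_adj]; decide)
      · exact key 5 (by decide) (by decide)
          (by simp only [SimpleGraph.pathGraph_adj]; decide)
  · rintro (x | x) (a | a) (a' | a') h1 h2 hA1 hA2 <;>
      simp only [hL1, hL2] at hA1 hA2
    · exact congrArg Sum.inl (hI2 x a a' h1 h2 hA1 hA2)
    · rw [attach_adj_rl] at h2
      exact absurd (show pathLabel 2 = Status.A by
        rw [← show a' = 2 from Fin.ext h2.2]; exact hA2) (by decide)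
    · rw [attach_adj_rl] at h1
      exact absurd (show pathLabel 2 = Status.A by
        rw [← show a = 2 from Fin.ext h1.2]; exact hA1) (by decide)
    · rw [attach_adj_rl] at h1
      exact absurd (show pathLabel 2 = Status.A by
        rw [← show a = 2 from Fin.ext h1.2]; exact hA1) (by decide)
    · rw [attach_adj_lr] at h1
      exact absurd (h1.1 ▸ hA1) (by rw [hv]; decide)
    · rw [attach_adj_lr] at h1
      exact absurd (h1.1 ▸ hA1) (by rw [hv]; decide)
    · rw [attach_adj_lr] at h2
      exact absurd (h2.1 ▸ hA2) (by rw [hv]; decide)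
    · rw [attach_adj_rr, SimpleGraph.pathGraph_adj] at h1 h2
      exact congrArg Sum.inr
        ((by decide : ∀ x a a' : Fin 6, ((a : ℕ) + 1 = x ∨ (x : ℕ) + 1 = a) →
          ((a' : ℕ) + 1 = x ∨ (x : ℕ) + 1 = a') → pathLabel a = Status.A →
          pathLabel a' = Status.A → a = a') x a a' h1 h2 hA1 hA2)
  · rintro (a | i) (x | x) hA1 hadj <;>
      simp only [hL1, hL2] at hA1 ⊢
    · exact hI4 a x hA1 hadj
    · rw [attach_adj_lr] at hadj
      exact absurd (hadj.1 ▸ hA1) (by rw [hv]; decide)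
    · rw [attach_adj_rl] at hadj
      exact absurd (show pathLabel 2 = Status.A by
        rw [← show i = 2 from Fin.ext hadj.2]; exact hA1) (by decide)
    · rw [attach_adj_rr, SimpleGraph.pathGraph_adj] at hadj
      exact (by decide : ∀ i x : Fin 6, ((i : ℕ) + 1 = x ∨ (x : ℕ) + 1 = i) →
        pathLabel i = Status.A → pathLabel x ≠ Status.A) i x hadj hA1
  · rintro (a | i)
    · obtain ⟨y, hy, hyC⟩ := hI5 a
      exact ⟨Sum.inl y, hy, by rw [hL1]; exact hyC⟩
    · obtain ⟨j, hj1, hj2⟩ := (by simp only [SimpleGraph.pathGraph_adj]; decide :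
        ∀ i : Fin 6, ∃ j, (SimpleGraph.pathGraph 6).Adj j i ∧ pathLabel j ≠ Status.C) i
      exact ⟨Sum.inr j, (attach_adj_rr).2 hj1, by rw [hL2]; exact hj2⟩
  · by_cases hvS : v ∈ S
    · refine ⟨Sum.inl '' S ∪ Sum.inr '' ({1,2,5} : Set (Fin 6)),
        attach_superdom hS _ (by simp [hvS]) ?_, ?_⟩
      · simp only [SimpleGraph.pathGraph_adj, Set.mem_insert_iff, Set.mem_singleton_iff]
        decide
      · rw [ncard_union_inl_inr, hScard]
        have h : ({1,2,5} : Set (Fin 6)) = {i | i = 1 ∨ i = 2 ∨ i = 5} := by ext i; simp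
        rw [h, ncard_setOf_fin6,
          show (Finset.univ.filter fun i : Fin 6 => i = 1 ∨ i = 2 ∨ i = 5).card = 3 from by decide]
        ring
    · refine ⟨Sum.inl '' S ∪ Sum.inr '' ({0,3,4} : Set (Fin 6)),
        attach_superdom hS _ (by simp [hvS]) ?_, ?_⟩
      · simp only [SimpleGraph.pathGraph_adj, Set.mem_insert_iff, Set.mem_singleton_iff]
        decide
      · rw [ncard_union_inl_inr, hScard]
        have h : ({0,3,4} : Set (Fin 6)) = {i | i = 0 ∨ i = 3 ∨ i = 4} := by ext i; simp
        rw [h, ncard_setOf_fin6,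
          show (Finset.univ.filter fun i : Fin 6 => i = 0 ∨ i = 3 ∨ i = 4).card = 3 from by decide]
        ring

lemma good_of_inT {W : Type} {G : SimpleGraph W} {L : W → Status} (h : InT W G L) :
    ∃ k : ℕ, Good W G L k := by
  induction h with
  | base => exact ⟨1, good_base⟩
  | step h v hv ih =>
      obtain ⟨k, hk⟩ := ih
      haveI : Finite _ := h.finite
      exact ⟨k + 1, good_step (fun a => rfl) (fun i => rfl) hk hv⟩

lemma totalDomNum_eq {W : Type} {G : SimpleGraph W} {L : W → Status} [Finite W] {k : ℕ}
    (hgood : Good W G L k) : totalDomNum G = 4 * k := by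
  obtain ⟨hn, hA, hC, hI1, hI2, hI4, hI5, -⟩ := hgood
  have hmem : 4 * k ∈ {n | ∃ S : Set W, TotalDomSet G S ∧ S.ncard = n} := by
    refine ⟨{a | L a ≠ Status.C}, ?_, hC⟩
    intro u
    obtain ⟨y, hy, hyC⟩ := hI5 u
    exact ⟨y, hyC, hy⟩
  refine le_antisymm (Nat.sInf_le hmem) (le_csInf ⟨_, hmem⟩ ?_)
  rintro n ⟨S, hT, rfl⟩
  classical
  choose f hf1 hf2 using hT
  have hsub1 : {a | L a = Status.A} ⊆ S := by
    intro a ha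
    obtain ⟨c, hc, hcy⟩ := hI1 a ha
    rw [← (hcy (f c)).1 (hf2 c).symm]
    exact hf1 c
  have hsub2 : f '' {a | L a = Status.A} ⊆ S := by
    rintro _ ⟨a, -, rfl⟩; exact hf1 a
  have hinj : Set.InjOn f {a | L a = Status.A} := by
    intro a ha b hb hfe
    exact hI2 (f a) a b (hf2 a).symm (hfe ▸ (hf2 b).symm) ha hb
  have hdisj : Disjoint {a | L a = Status.A} (f '' {a | L a = Status.A}) := by
    rw [Set.disjoint_left]
    rintro x hx ⟨a, ha, rfl⟩
    exact hI4 a (f a) ha (hf2 a).symm hx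
  calc 4 * k = {a | L a = Status.A}.ncard + (f '' {a | L a = Status.A}).ncard := by
        rw [Set.ncard_image_of_injOn hinj, hA]; ring
    _ = ({a | L a = Status.A} ∪ f '' {a | L a = Status.A}).ncard :=
        (Set.ncard_union_eq hdisj (Set.toFinite _) (Set.toFinite _)).symm
    _ ≤ S.ncard :=
        Set.ncard_le_ncard (Set.union_subset hsub1 hsub2) (Set.toFinite _)

lemma superDomNum_eq {W : Type} {G : SimpleGraph W} {L : W → Status} [Finite W] {k : ℕ}
    (hgood : Good W G L k) : superDomNum G = 3 * k := by
  obtain ⟨hn, -, -, -, -, -, -, S₀, hS₀, hS₀card⟩ := hgood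
  have hmem : 3 * k ∈ {n | ∃ S : Set W, SuperDomSet G S ∧ S.ncard = n} := ⟨S₀, hS₀, hS₀card⟩
  refine le_antisymm (Nat.sInf_le hmem) (le_csInf ⟨_, hmem⟩ ?_)
  rintro n ⟨S, hS, rfl⟩
  classical
  have hsel : ∀ u : W, u ∈ Sᶜ → ∃ x, x ∈ S ∧ G.neighborSet x ∩ Sᶜ = {u} := hS
  choose! g hg1 hg2 using hsel
  have hinj : Set.InjOn g Sᶜ := by
    intro u hu u' hu' he
    have h1 := hg2 u hu
    have h2 := hg2 u' hu'
    rw [he, h2] at h1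
    exact (Set.singleton_eq_singleton_iff.1 h1).symm
  have hle : Sᶜ.ncard ≤ S.ncard := by
    rw [← Set.ncard_image_of_injOn hinj]
    exact Set.ncard_le_ncard (by rintro _ ⟨u, hu, rfl⟩; exact hg1 u hu) (Set.toFinite _)
  have htot : S.ncard + Sᶜ.ncard = 6 * k := by rw [Set.ncard_add_ncard_compl, hn]
  omega

end AuxProof

/-- Every tree `T` with `(T, S) ∈ 𝒯` for some labeling `S` satisfies
`γ_t(T)/γ_sp(T) = 4/3`. -/
theorem totalDomNum_superDomNum_ratio {W : Type} {G : SimpleGraph W} {L : W → Status}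
    (h : InT W G L) :
    3 * totalDomNum G = 4 * superDomNum G := by
  haveI : Finite W := h.finite
  obtain ⟨k, hk⟩ := good_of_inT h
  rw [totalDomNum_eq hk, superDomNum_eq hk]
  ring
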